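/- Let D ≥ 2, let ι be a finite index type, let v : ι → ℝ^D be a linearly independent family, let L : ι → ℝ be positive, let W : ℝ → ℝ, and define 𝒲(F) = Σ_{i ∈ ι} W(‖F(v i)‖ / L i) for linear maps F of ℝ^D. Then there exist a linear map F₀ : ℝ^D → ℝ^D and a basis b : Fin D → ℝ^D such that ‖F₀(b j)‖ = ‖b j‖ for every j, F₀ does not preserve the inner product (there exist x, y ∈ ℝ^D with ⟨F₀ x, F₀ y⟩ ≠ ⟨x, y⟩), and 𝒲(F₀) = 𝒲(id). (The Cauchy–Born continuum energy density of a homogeneous lattice of order 1 vanishes on a shear, hence is not shear-resisting.) -/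

import Mathlib

open scoped BigOperators RealInnerProductSpace

theorem order_one_energy_vanishes_on_shear
    (D : ℕ) (hD : 2 ≤ D) (ι : Type) [Fintype ι]
    (v : ι → EuclideanSpace ℝ (Fin D)) (hv : LinearIndependent ℝ v)
    (L : ι → ℝ) (hL : ∀ i, 0 < L i) (W : ℝ → ℝ) :
    ∃ F₀ : EuclideanSpace ℝ (Fin D) →ₗ[ℝ] EuclideanSpace ℝ (Fin D),
      ∃ b : Module.Basis (Fin D) ℝ (EuclideanSpace ℝ (Fin D)),
        (∀ j : Fin D, ‖F₀ (b j)‖ = ‖b j‖) ∧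
        (∃ x y : EuclideanSpace ℝ (Fin D), ⟪F₀ x, F₀ y⟫ ≠ ⟪x, y⟫) ∧
        (∑ i : ι, W (‖F₀ (v i)‖ / L i)) =
          ∑ i : ι, W (‖(LinearMap.id : EuclideanSpace ℝ (Fin D) →ₗ[ℝ]
            EuclideanSpace ℝ (Fin D)) (v i)‖ / L i) := by
  classical
  have hs : LinearIndepOn ℝ id (Set.range v) :=
    hv.linearIndepOn_id
  set T : Set (EuclideanSpace ℝ (Fin D)) := hs.extend (Set.subset_univ _) with hT
  have hTfin : T.Finite := (hs.linearIndepOn_extend _).linearIndependent.setFinite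
  haveI : Fintype T := hTfin.fintype
  set B : Module.Basis T ℝ (EuclideanSpace ℝ (Fin D)) := Module.Basis.extend hs with hB
  have hcard : Fintype.card T = D := by
    have := Module.finrank_eq_card_basis B
    rw [finrank_euclideanSpace_fin] at this
    omega
  let e : T ≃ Fin D := Fintype.equivFinOfCardEq hcard
  let b : Module.Basis (Fin D) ℝ (EuclideanSpace ℝ (Fin D)) := B.reindex e
  have hb : ∀ j, b j = ((e.symm j : T) : EuclideanSpace ℝ (Fin D)) := by
    intro j
    rw [Module.Basis.reindex_apply, hB]
    exact Module.Basis.extend_apply_self hs _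
  have h0 : (0 : ℕ) < D := by omega
  have h1 : (1 : ℕ) < D := by omega
  set j0 : Fin D := ⟨0, h0⟩
  set j1 : Fin D := ⟨1, h1⟩
  have hj01 : j0 ≠ j1 := by simp [j0, j1, Fin.ext_iff]
  have hn0 : (0:ℝ) < ‖b j0‖ := norm_pos_iff.mpr (b.ne_zero j0)
  have hn1 : (0:ℝ) < ‖b j1‖ := norm_pos_iff.mpr (b.ne_zero j1)
  set F₀ : EuclideanSpace ℝ (Fin D) →ₗ[ℝ] EuclideanSpace ℝ (Fin D) :=
    b.constr ℝ (fun j => if j = j1 then (‖b j1‖ / ‖b j0‖) • (b j0) else b j) with hF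
  have hFb : ∀ j, F₀ (b j) = if j = j1 then (‖b j1‖ / ‖b j0‖) • (b j0) else b j := by
    intro j; rw [hF, Module.Basis.constr_basis]
  have hnorm : ∀ j, ‖F₀ (b j)‖ = ‖b j‖ := by
    intro j
    rw [hFb]
    by_cases h : j = j1
    · subst h
      rw [if_pos rfl, norm_smul, Real.norm_of_nonneg (by positivity),
        div_mul_cancel₀ _ (ne_of_gt hn0)]
    · rw [if_neg h]
  refine ⟨F₀, b, hnorm, ⟨b j0, b j1, ?_⟩, ?_⟩
  · rw [hFb, hFb, if_neg hj01, if_pos rfl, real_inner_smul_right]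
    have hlt : ⟪b j0, b j1⟫ < ‖b j0‖ * ‖b j1‖ := by
      rw [inner_lt_norm_mul_iff_real]
      intro h
      have h2 := congrArg (fun x => b.repr x j1) h
      simp only [map_smul, Module.Basis.repr_self, Finsupp.smul_apply,
        Finsupp.single_apply, if_neg hj01, smul_eq_mul] at h2
      norm_num at h2
      exact (ne_of_gt hn0) h2.symm
    rw [real_inner_self_eq_norm_mul_norm]
    intro h
    rw [← h] at hlt
    have heq : ‖b j1‖ / ‖b j0‖ * (‖b j0‖ * ‖b j0‖) = ‖b j0‖ * ‖b j1‖ := by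
      field_simp
    rw [heq] at hlt
    exact lt_irrefl _ hlt
  · apply Finset.sum_congr rfl
    intro i _
    have hmem : v i ∈ T := hs.subset_extend _ ⟨i, rfl⟩
    have hvi : v i = b (e ⟨v i, hmem⟩) := by rw [hb]; simp
    rw [LinearMap.id_apply, hvi, hnorm]
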